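/- arXiv:math/0607419 — 2 statements merged into one kernel-verified Lean document; each statement's English description precedes it below -/
import Mathlib

section
/- Let p be a prime and work over K = ℤ/pℤ. A word w ∈ A* is primitive for the unshuffle coproduct in K⟨A⟩ if and only if w = a^{p^α} for some letter a and some α ≥ 0. -/
open TensorProduct

/-- The unshuffle coproduct on the monoid algebra of the free monoid (= `K⟨A⟩`):
the unique algebra morphism (for the concatenation product) sending each letter `a`
to `a ⊗ 1 + 1 ⊗ a`. -/
noncomputable def unshuffle (K A : Type*) [CommSemiring K] :
    MonoidAlgebra K (FreeMonoid A) →ₐ[K]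
      MonoidAlgebra K (FreeMonoid A) ⊗[K] MonoidAlgebra K (FreeMonoid A) :=
  MonoidAlgebra.lift K _ (FreeMonoid A)
    (FreeMonoid.lift fun a =>
      (MonoidAlgebra.of K (FreeMonoid A) (FreeMonoid.of a)) ⊗ₜ[K] 1
        + 1 ⊗ₜ[K] (MonoidAlgebra.of K (FreeMonoid A) (FreeMonoid.of a)))

/-- The word `l` viewed as an element of `K⟨A⟩`. -/
noncomputable def wd {K : Type*} {A : Type*} [CommSemiring K] (l : List A) :
    MonoidAlgebra K (FreeMonoid A) :=
  MonoidAlgebra.of K (FreeMonoid A) (FreeMonoid.ofList l)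

section Machinery

variable {K A : Type*} [CommSemiring K]

private lemma phiComm (x y : MonoidAlgebra K (FreeMonoid A)) :
    Commute
      (MonoidAlgebra.mapDomainAlgHom K K
        (MonoidHom.inl (FreeMonoid A) (FreeMonoid A)) x)
      (MonoidAlgebra.mapDomainAlgHom K K
        (MonoidHom.inr (FreeMonoid A) (FreeMonoid A)) y) := by
  induction x using MonoidAlgebra.induction_linear with
  | zero => rw [map_zero]; exact Commute.zero_left _
  | add f g hf hg => rw [map_add]; exact hf.add_left hg
  | single m c =>
    induction y using MonoidAlgebra.induction_linear with
    | zero => rw [map_zero]; exact Commute.zero_right _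
    | add f g hf hg => rw [map_add]; exact hf.add_right hg
    | single n d =>
      simp only [MonoidAlgebra.mapDomainAlgHom_apply, MonoidAlgebra.mapDomain_single]
      unfold Commute SemiconjBy
      rw [MonoidAlgebra.single_mul_single, MonoidAlgebra.single_mul_single]
      simp [Prod.mk_mul_mk, mul_comm]

noncomputable def phi (K A : Type*) [CommSemiring K] :
    MonoidAlgebra K (FreeMonoid A) ⊗[K] MonoidAlgebra K (FreeMonoid A) →ₐ[K]
      MonoidAlgebra K (FreeMonoid A × FreeMonoid A) :=
  Algebra.TensorProduct.lift
    (MonoidAlgebra.mapDomainAlgHom K K (MonoidHom.inl (FreeMonoid A) (FreeMonoid A)))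
    (MonoidAlgebra.mapDomainAlgHom K K (MonoidHom.inr (FreeMonoid A) (FreeMonoid A)))
    phiComm

lemma phi_tmul_single (u v : FreeMonoid A) (c d : K) :
    phi K A (MonoidAlgebra.single u c ⊗ₜ[K] MonoidAlgebra.single v d) =
      MonoidAlgebra.single (u, v) (c * d) := by
  rw [phi, Algebra.TensorProduct.lift_tmul]
  simp only [MonoidAlgebra.mapDomainAlgHom_apply, MonoidAlgebra.mapDomain_single]
  rw [MonoidAlgebra.single_mul_single]
  simp [Prod.mk_mul_mk]

end Machinery

section Words

variable {K A : Type*} [CommSemiring K]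

noncomputable def cpr (K A : Type*) [CommSemiring K] :
    MonoidAlgebra K (FreeMonoid A) →ₐ[K]
      MonoidAlgebra K (FreeMonoid A × FreeMonoid A) :=
  (phi K A).comp (unshuffle K A)

lemma wd_nil : wd (K := K) ([] : List A) = 1 := by
  rw [wd, FreeMonoid.ofList_nil, map_one]

lemma wd_cons (a : A) (t : List A) :
    wd (K := K) (a :: t) =
      MonoidAlgebra.of K (FreeMonoid A) (FreeMonoid.of a) * wd t := by
  rw [wd, wd, FreeMonoid.ofList_cons, map_mul]

lemma unshuffle_of (a : A) :
    unshuffle K A (MonoidAlgebra.of K (FreeMonoid A) (FreeMonoid.of a)) =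
      (MonoidAlgebra.of K (FreeMonoid A) (FreeMonoid.of a)) ⊗ₜ[K] 1
        + 1 ⊗ₜ[K] (MonoidAlgebra.of K (FreeMonoid A) (FreeMonoid.of a)) := by
  rw [unshuffle, MonoidAlgebra.lift_of, FreeMonoid.lift_eval_of]

lemma cpr_of (a : A) :
    cpr K A (MonoidAlgebra.of K (FreeMonoid A) (FreeMonoid.of a)) =
      MonoidAlgebra.single (FreeMonoid.of a, (1 : FreeMonoid A)) (1 : K)
        + MonoidAlgebra.single ((1 : FreeMonoid A), FreeMonoid.of a) (1 : K) := by
  rw [cpr, AlgHom.comp_apply, unshuffle_of, map_add]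
  rw [show MonoidAlgebra.of K (FreeMonoid A) (FreeMonoid.of a) =
    MonoidAlgebra.single (FreeMonoid.of a) (1 : K) from rfl]
  rw [show (1 : MonoidAlgebra K (FreeMonoid A)) =
    MonoidAlgebra.single (1 : FreeMonoid A) (1 : K) from MonoidAlgebra.one_def]
  rw [phi_tmul_single, phi_tmul_single, one_mul]

lemma cpr_nil :
    cpr K A (wd []) =
      MonoidAlgebra.single ((1 : FreeMonoid A), (1 : FreeMonoid A)) (1 : K) := by
  rw [wd_nil, map_one, MonoidAlgebra.one_def]
  rfl

lemma cpr_cons (a : A) (t : List A) :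
    cpr K A (wd (a :: t)) =
      (MonoidAlgebra.single (FreeMonoid.of a, (1 : FreeMonoid A)) (1 : K)
        + MonoidAlgebra.single ((1 : FreeMonoid A), FreeMonoid.of a) (1 : K))
        * cpr K A (wd t) := by
  rw [wd_cons, map_mul, cpr_of]

-- coefficient helpers
lemma coeff_left_cons (a : A) (f : MonoidAlgebra K (FreeMonoid A × FreeMonoid A))
    (u : List A) (v : FreeMonoid A) :
    (MonoidAlgebra.single (FreeMonoid.of a, (1 : FreeMonoid A)) (1 : K) * f).coeff
        (FreeMonoid.ofList (a :: u), v) = f.coeff (FreeMonoid.ofList u, v) := by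
  rw [MonoidAlgebra.coeff_single_mul_eq_mul_coeff, one_mul]
  rintro ⟨z1, z2⟩ -
  constructor
  · rintro h
    rw [Prod.mk_mul_mk, Prod.mk.injEq] at h
    obtain ⟨h1, h2⟩ := h
    rw [one_mul] at h2
    subst h2
    have : FreeMonoid.toList (FreeMonoid.of a * z1) = a :: u := by rw [h1]; rfl
    rw [FreeMonoid.toList_of_mul] at this
    simp only [List.cons.injEq] at this
    rw [← this.2]
    rfl
  · rintro h
    rw [Prod.mk.injEq] at h
    obtain ⟨h1, h2⟩ := h
    subst h1; subst h2
    rw [Prod.mk_mul_mk, one_mul]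
    rfl

lemma coeff_left_zero (a : A) (f : MonoidAlgebra K (FreeMonoid A × FreeMonoid A))
    (u : List A) (hu : u.head? ≠ some a) (v : FreeMonoid A) :
    (MonoidAlgebra.single (FreeMonoid.of a, (1 : FreeMonoid A)) (1 : K) * f).coeff
        (FreeMonoid.ofList u, v) = 0 := by
  apply MonoidAlgebra.single_mul_apply_of_not_exists_mul
  rintro ⟨⟨z1, z2⟩, hd⟩
  rw [Prod.mk_mul_mk, Prod.mk.injEq] at hd
  apply hu
  have : u = FreeMonoid.toList (FreeMonoid.of a * z1) := by rw [← hd.1]; rfl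
  rw [FreeMonoid.toList_of_mul] at this
  rw [this]; rfl

lemma coeff_right_cons (a : A) (f : MonoidAlgebra K (FreeMonoid A × FreeMonoid A))
    (u : FreeMonoid A) (v : List A) :
    (MonoidAlgebra.single ((1 : FreeMonoid A), FreeMonoid.of a) (1 : K) * f).coeff
        (u, FreeMonoid.ofList (a :: v)) = f.coeff (u, FreeMonoid.ofList v) := by
  rw [MonoidAlgebra.coeff_single_mul_eq_mul_coeff, one_mul]
  rintro ⟨z1, z2⟩ -
  constructor
  · rintro h
    rw [Prod.mk_mul_mk, Prod.mk.injEq] at h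
    obtain ⟨h1, h2⟩ := h
    rw [one_mul] at h1
    subst h1
    have : FreeMonoid.toList (FreeMonoid.of a * z2) = a :: v := by rw [h2]; rfl
    rw [FreeMonoid.toList_of_mul] at this
    simp only [List.cons.injEq] at this
    rw [← this.2]
    rfl
  · rintro h
    rw [Prod.mk.injEq] at h
    obtain ⟨h1, h2⟩ := h
    subst h1; subst h2
    rw [Prod.mk_mul_mk, one_mul]
    rfl

lemma coeff_right_zero (a : A) (f : MonoidAlgebra K (FreeMonoid A × FreeMonoid A))
    (u : FreeMonoid A) (v : List A) (hv : v.head? ≠ some a) :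
    (MonoidAlgebra.single ((1 : FreeMonoid A), FreeMonoid.of a) (1 : K) * f).coeff
        (u, FreeMonoid.ofList v) = 0 := by
  apply MonoidAlgebra.single_mul_apply_of_not_exists_mul
  rintro ⟨⟨z1, z2⟩, hd⟩
  rw [Prod.mk_mul_mk, Prod.mk.injEq] at hd
  apply hv
  have : v = FreeMonoid.toList (FreeMonoid.of a * z2) := by rw [← hd.2]; rfl
  rw [FreeMonoid.toList_of_mul] at this
  rw [this]; rfl

end Words

section Claims

variable {K A : Type*} [CommSemiring K]

lemma coeff_one_right (t : List A) :
    (cpr K A (wd t)).coeff ((1 : FreeMonoid A), FreeMonoid.ofList t) = 1 := by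
  induction t with
  | nil => rw [cpr_nil, FreeMonoid.ofList_nil]; exact Finsupp.single_eq_same
  | cons a t ih =>
    rw [cpr_cons, add_mul, MonoidAlgebra.coeff_add, Finsupp.add_apply,
      show ((1 : FreeMonoid A), FreeMonoid.ofList (a :: t))
        = (FreeMonoid.ofList ([] : List A), FreeMonoid.ofList (a :: t)) from rfl,
      coeff_left_zero a _ [] (by simp), coeff_right_cons, zero_add]
    exact ih

lemma coeff_block (m : ℕ) (a b : A) (hba : b ≠ a) (t : List A) :
    (cpr K A (wd (List.replicate m a ++ b :: t))).coeff
      (FreeMonoid.ofList (List.replicate m a), FreeMonoid.ofList (b :: t)) = 1 := by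
  induction m with
  | zero =>
    rw [List.replicate_zero, List.nil_append,
      show FreeMonoid.ofList ([] : List A) = 1 from rfl]
    exact coeff_one_right (b :: t)
  | succ m ih =>
    rw [List.replicate_succ, List.cons_append, cpr_cons, add_mul, MonoidAlgebra.coeff_add, Finsupp.add_apply,
      coeff_left_cons, coeff_right_zero a _ _ (b :: t) (by simpa using hba), add_zero]
    exact ih

lemma coeff_rep (a : A) : ∀ n k : ℕ, k ≤ n →
    (cpr K A (wd (List.replicate n a))).coeff
      (FreeMonoid.ofList (List.replicate k a),
        FreeMonoid.ofList (List.replicate (n - k) a))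
      = (n.choose k : K) := by
  intro n
  induction n with
  | zero =>
    intro k hk
    interval_cases k
    show ((cpr K A) (wd ([] : List A))).coeff (1, 1) = ((Nat.choose 0 0 : ℕ) : K)
    rw [cpr_nil, MonoidAlgebra.coeff_single, Finsupp.single_eq_same]
    norm_num
  | succ n ih =>
    intro k hk
    rw [show List.replicate (n+1) a = a :: List.replicate n a from List.replicate_succ ..,
      cpr_cons, add_mul, MonoidAlgebra.coeff_add, Finsupp.add_apply]
    rcases k with _ | k'
    · rw [show List.replicate 0 a = ([] : List A) from rfl,
        coeff_left_zero a _ [] (by simp), Nat.sub_zero,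
        show List.replicate (n+1) a = a :: List.replicate n a from List.replicate_succ ..,
        coeff_right_cons]
      have h0 := ih 0 (Nat.zero_le n)
      rw [Nat.sub_zero, List.replicate_zero] at h0
      rw [h0]
      simp
    · have hk' : k' ≤ n := Nat.succ_le_succ_iff.mp hk
      rw [show List.replicate (k'+1) a = a :: List.replicate k' a from List.replicate_succ ..,
        coeff_left_cons]
      have h1 := ih k' hk'
      rw [show n + 1 - (k' + 1) = n - k' from by omega] at *
      rw [h1]
      rcases Nat.lt_or_ge k' n with hlt | hge
      · rw [show List.replicate (n - k') a = a :: List.replicate (n - k' - 1) a from by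
          rw [show n - k' = (n - k' - 1) + 1 from by omega]; exact List.replicate_succ ..,
          coeff_right_cons]
        have h2 := ih (k' + 1) hlt
        rw [show n - (k' + 1) = n - k' - 1 from by omega,
          show List.replicate (k'+1) a = a :: List.replicate k' a from
            List.replicate_succ ..] at h2
        rw [h2, Nat.choose_succ_succ]
        push_cast
        ring
      · have : k' = n := le_antisymm hk' hge
        subst this
        rw [show k' - k' = 0 from by omega, List.replicate_zero,
          coeff_right_zero a _ _ [] (by simp)]
        simp
end Claims

section NumberTheory

lemma lucas_pow_choose {p : ℕ} (hp : p.Prime) :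
    ∀ ν m : ℕ, (((p ^ ν * m).choose (p ^ ν) : ℕ) : ZMod p) = (m : ZMod p) := by
  haveI : Fact p.Prime := ⟨hp⟩
  intro ν
  induction ν with
  | zero => intro m; simp [Nat.choose_one_right]
  | succ ν ihv =>
    intro m
    have h := Choose.choose_modEq_choose_mod_mul_choose_div
      (p := p) (n := p ^ (ν+1) * m) (k := p ^ (ν+1))
    have hnp : (p ^ (ν+1) * m) % p = 0 :=
      Nat.mod_eq_zero_of_dvd
        (dvd_mul_of_dvd_left (dvd_pow_self p (Nat.succ_ne_zero ν)) m)
    have hkp : (p ^ (ν+1)) % p = 0 :=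
      Nat.mod_eq_zero_of_dvd (dvd_pow_self p (Nat.succ_ne_zero ν))
    have hnd : (p ^ (ν+1) * m) / p = p ^ ν * m := by
      rw [pow_succ, mul_comm (p ^ ν) p, mul_assoc, Nat.mul_div_cancel_left _ hp.pos]
    have hkd : (p ^ (ν+1)) / p = p ^ ν := by
      rw [pow_succ, Nat.mul_div_cancel _ hp.pos]
    rw [hnp, hkp, hnd, hkd, Nat.choose_self, Nat.cast_one, one_mul] at h
    have h2 := (ZMod.intCast_eq_intCast_iff _ _ _).mpr h
    push_cast at h2
    rw [h2]
    exact ihv m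

lemma eq_pow_of_dvd_choose {p n : ℕ} (hp : p.Prime) (hn : 0 < n)
    (H : ∀ k, 0 < k → k < n → p ∣ n.choose k) : ∃ α, n = p ^ α := by
  haveI : Fact p.Prime := ⟨hp⟩
  obtain ⟨ν, m, hqm, hpm⟩ : ∃ ν m, p ^ ν * m = n ∧ ¬ p ∣ m :=
    ⟨n.factorization p, n / p ^ n.factorization p,
      Nat.mul_div_cancel' (Nat.ordProj_dvd n p), Nat.not_dvd_ordCompl hp hn.ne'⟩
  rcases eq_or_ne m 1 with h1 | h1
  · exact ⟨ν, by rw [← hqm, h1, mul_one]⟩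
  · have hm0 : m ≠ 0 := by
      intro h0; rw [h0, mul_zero] at hqm; omega
    have hm2 : 2 ≤ m := by omega
    have hqpos : 0 < p ^ ν := pow_pos hp.pos ν
    have hqlt : p ^ ν < n := by
      have h2 : p ^ ν * 2 ≤ p ^ ν * m := Nat.mul_le_mul_left _ hm2
      omega
    have hd := H (p ^ ν) hqpos hqlt
    have hz : ((n.choose (p ^ ν) : ℕ) : ZMod p) = 0 :=
      (ZMod.natCast_eq_zero_iff _ _).mpr hd
    rw [← hqm, lucas_pow_choose hp] at hz
    exact absurd ((ZMod.natCast_eq_zero_iff _ _).mp hz) hpm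

end NumberTheory

section Structure

variable {A : Type*}

lemma word_structure (w : List A) :
    w = [] ∨ (∃ a n, 0 < n ∧ w = List.replicate n a) ∨
      (∃ a m b t, b ≠ a ∧ 0 < m ∧ w = List.replicate m a ++ b :: t) := by
  rcases w with _ | ⟨a, t⟩
  · left; rfl
  right
  have aux : ∀ (t : List A) (a : A),
      (∃ n, 0 < n ∧ a :: t = List.replicate n a) ∨
        (∃ m b s, b ≠ a ∧ 0 < m ∧ a :: t = List.replicate m a ++ b :: s) := by
    intro t
    induction t with
    | nil => intro a; left; exact ⟨1, one_pos, rfl⟩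
    | cons c t' ih =>
      intro a
      by_cases hca : c = a
      · subst hca
        rcases ih c with ⟨n, hn, hrep⟩ | ⟨m, b, s, hb, hm, hw⟩
        · left; exact ⟨n + 1, by omega, by rw [List.replicate_succ, ← hrep]⟩
        · right
          exact ⟨m + 1, b, s, hb, by omega,
            by rw [List.replicate_succ, List.cons_append, ← hw]⟩
      · right; exact ⟨1, c, t', hca, one_pos, rfl⟩
  rcases aux t a with ⟨n, hn, hrep⟩ | ⟨m, b, s, hb, hm, hw⟩
  · left; exact ⟨a, n, hn, hrep⟩
  · right; exact ⟨a, m, b, s, hb, hm, hw⟩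

lemma rep_ne_one (a : A) {m : ℕ} (hm : 0 < m) :
    FreeMonoid.ofList (List.replicate m a) ≠ (1 : FreeMonoid A) := by
  intro h
  have h2 : List.replicate m a = [] := congrArg FreeMonoid.toList h
  rw [List.replicate_eq_nil_iff] at h2
  omega

lemma cons_ne_one (b : A) (t : List A) :
    FreeMonoid.ofList (b :: t) ≠ (1 : FreeMonoid A) := by
  intro h
  exact List.cons_ne_nil b t (congrArg FreeMonoid.toList h)

end Structure

/-- `P` is primitive for the unshuffle coproduct: `c(P) = P ⊗ 1 + 1 ⊗ P`. -/
def IsPrimitive {K A : Type*} [CommSemiring K] (P : MonoidAlgebra K (FreeMonoid A)) : Prop :=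
  unshuffle K A P = P ⊗ₜ[K] 1 + 1 ⊗ₜ[K] P

/-- over `ℤ/pℤ` (`p` prime), a word is primitive for the unshuffle coproduct
iff it is `a^(p^α)` for some letter `a` and some `α ≥ 0`. -/
theorem primitive_word_iff_p_power {A : Type*} (p : ℕ) (hp : p.Prime) (w : List A) :
    IsPrimitive (wd (K := ZMod p) w) ↔
      ∃ (a : A) (α : ℕ), w = List.replicate (p ^ α) a := by
  haveI : Fact p.Prime := ⟨hp⟩
  haveI : Fact (1 < p) := ⟨hp.one_lt⟩
  constructor
  · intro h
    have h' : unshuffle (ZMod p) A (wd w)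
        = wd w ⊗ₜ[ZMod p] 1 + 1 ⊗ₜ[ZMod p] wd w := h
    have hc : cpr (ZMod p) A (wd w)
        = MonoidAlgebra.single (FreeMonoid.ofList w, (1 : FreeMonoid A)) (1 : ZMod p)
          + MonoidAlgebra.single ((1 : FreeMonoid A), FreeMonoid.ofList w) (1 : ZMod p) := by
      rw [cpr, AlgHom.comp_apply, h', map_add,
        show wd (K := ZMod p) w
          = MonoidAlgebra.single (FreeMonoid.ofList w) (1 : ZMod p) from rfl,
        show (1 : MonoidAlgebra (ZMod p) (FreeMonoid A))
          = MonoidAlgebra.single (1 : FreeMonoid A) (1 : ZMod p) from MonoidAlgebra.one_def,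
        phi_tmul_single, phi_tmul_single, one_mul]
    rcases word_structure w with rfl | ⟨a, n, hn, rfl⟩ | ⟨a, m, b, t, hb, hm, rfl⟩
    · -- empty word: contradiction
      exfalso
      have e := congrArg
        (fun f : MonoidAlgebra (ZMod p) (FreeMonoid A × FreeMonoid A) =>
          f.coeff ((1 : FreeMonoid A), (1 : FreeMonoid A))) hc
      beta_reduce at e
      rw [cpr_nil, FreeMonoid.ofList_nil, MonoidAlgebra.coeff_add, Finsupp.add_apply, MonoidAlgebra.coeff_single, Finsupp.single_eq_same] at e
      exact one_ne_zero (left_eq_add.mp e)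
    · -- power of a single letter
      refine ⟨a, ?_⟩
      have Hdvd : ∀ k, 0 < k → k < n → p ∣ n.choose k := by
        intro k hk0 hkn
        have e := congrArg
          (fun f : MonoidAlgebra (ZMod p) (FreeMonoid A × FreeMonoid A) =>
            f.coeff (FreeMonoid.ofList (List.replicate k a),
              FreeMonoid.ofList (List.replicate (n - k) a))) hc
        beta_reduce at e
        rw [coeff_rep a n k hkn.le, MonoidAlgebra.coeff_add, Finsupp.add_apply,
          MonoidAlgebra.coeff_single, Finsupp.single_eq_of_ne' (by
            intro hq
            exact rep_ne_one a (by omega : 0 < n - k) (Prod.ext_iff.mp hq).2.symm),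
          MonoidAlgebra.coeff_single, Finsupp.single_eq_of_ne' (by
            intro hq
            exact rep_ne_one a hk0 (Prod.ext_iff.mp hq).1.symm),
          add_zero] at e
        exact (ZMod.natCast_eq_zero_iff _ _).mp e
      obtain ⟨α, hα⟩ := eq_pow_of_dvd_choose hp hn Hdvd
      exact ⟨α, by rw [← hα]⟩
    · -- two distinct letters: contradiction
      exfalso
      have e := congrArg
        (fun f : MonoidAlgebra (ZMod p) (FreeMonoid A × FreeMonoid A) =>
          f.coeff (FreeMonoid.ofList (List.replicate m a), FreeMonoid.ofList (b :: t))) hc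
      beta_reduce at e
      rw [coeff_block m a b hb t, MonoidAlgebra.coeff_add, Finsupp.add_apply,
        MonoidAlgebra.coeff_single, Finsupp.single_eq_of_ne' (by
          intro hq
          exact cons_ne_one b t (Prod.ext_iff.mp hq).2.symm),
        MonoidAlgebra.coeff_single, Finsupp.single_eq_of_ne' (by
          intro hq
          exact rep_ne_one a hm (Prod.ext_iff.mp hq).1.symm),
        add_zero] at e
      exact one_ne_zero e
  · rintro ⟨a, α, rfl⟩
    show unshuffle (ZMod p) A (wd (List.replicate (p ^ α) a)) = _
    have hwd : ∀ n : ℕ, wd (K := ZMod p) (List.replicate n a)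
        = (MonoidAlgebra.of (ZMod p) (FreeMonoid A) (FreeMonoid.of a)) ^ n := by
      intro n
      induction n with
      | zero => rw [List.replicate_zero, wd_nil, pow_zero]
      | succ n ih => rw [List.replicate_succ, wd_cons, ih, pow_succ']
    have hinj : Function.Injective (algebraMap (ZMod p)
        (MonoidAlgebra (ZMod p) (FreeMonoid A) ⊗[ZMod p]
          MonoidAlgebra (ZMod p) (FreeMonoid A))) := by
      intro c d hcd
      have h2 := congrArg (phi (ZMod p) A) hcd
      rw [AlgHom.commutes, AlgHom.commutes] at h2
      have h3 := congrArg
        (fun f : MonoidAlgebra (ZMod p) (FreeMonoid A × FreeMonoid A) =>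
          f.coeff ((1 : FreeMonoid A), (1 : FreeMonoid A))) h2
      simp [MonoidAlgebra.coe_algebraMap] at h3
      exact (Finsupp.single_eq_same.symm.trans h3).trans Finsupp.single_eq_same
    haveI : CharP (MonoidAlgebra (ZMod p) (FreeMonoid A) ⊗[ZMod p]
        MonoidAlgebra (ZMod p) (FreeMonoid A)) p :=
      charP_of_injective_algebraMap hinj p
    set x := MonoidAlgebra.of (ZMod p) (FreeMonoid A) (FreeMonoid.of a) with hx
    have hcomm : Commute (x ⊗ₜ[ZMod p] (1 : MonoidAlgebra (ZMod p) (FreeMonoid A)))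
        ((1 : MonoidAlgebra (ZMod p) (FreeMonoid A)) ⊗ₜ[ZMod p] x) := by
      unfold Commute SemiconjBy
      rw [Algebra.TensorProduct.tmul_mul_tmul, Algebra.TensorProduct.tmul_mul_tmul,
        one_mul, mul_one]
    rw [hwd, map_pow, unshuffle_of, add_pow_char_pow_of_commute p α hcomm,
      Algebra.TensorProduct.tmul_pow, Algebra.TensorProduct.tmul_pow, one_pow, ← hwd]
end

section
/- Let p be a prime, a ≠ b two distinct letters, and α, β positive integers. The element a^α b^β − b^β a^α of (ℤ/pℤ)⟨A⟩ is primitive for the unshuffle coproduct if and only if α and β are both powers of p. -/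
open TensorProduct

section Aux

variable {K A : Type*} [CommSemiring K]

noncomputable def DD {K A : Type*} [CommSemiring K] (x : A) :
    MonoidAlgebra K (FreeMonoid A) ⊗[K] MonoidAlgebra K (FreeMonoid A) :=
  wd [x] ⊗ₜ[K] 1 + 1 ⊗ₜ[K] wd [x]

lemma wd_mul (l l' : List A) : wd (K := K) l * wd l' = wd (l ++ l') := by
  simp only [wd, ← map_mul]; rfl

lemma wd_replicate (n : ℕ) (x : A) : wd (K := K) (List.replicate n x) = (wd [x]) ^ n := by
  induction n with
  | zero => simpa using wd_nil
  | succ n ih =>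
      rw [pow_succ', List.replicate_succ,
        show (x :: List.replicate n x) = [x] ++ List.replicate n x from rfl, ← wd_mul, ih]

lemma unshuffle_wd (l : List A) :
    unshuffle K A (wd l) = (l.map fun x => DD (K := K) x).prod := by
  rw [unshuffle, wd, MonoidAlgebra.lift_of, FreeMonoid.lift_apply]
  rfl

lemma unshuffle_wd_rep (x y : A) (α β : ℕ) :
    unshuffle K A (wd (List.replicate α x ++ List.replicate β y)) =
      DD (K := K) x ^ α * DD y ^ β := by
  rw [unshuffle_wd, List.map_append, List.prod_append, List.map_replicate, List.map_replicate,
    List.prod_replicate, List.prod_replicate]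

lemma DD_pow (x : A) (n : ℕ) :
    (DD (K := K) x) ^ n =
      ∑ i ∈ Finset.range (n + 1), ((n.choose i : ℕ) : K) •
        (wd (List.replicate i x) ⊗ₜ[K] wd (List.replicate (n - i) x)) := by
  have hc : Commute (wd (K := K) [x] ⊗ₜ[K] (1 : MonoidAlgebra K (FreeMonoid A)))
      ((1 : MonoidAlgebra K (FreeMonoid A)) ⊗ₜ[K] wd [x]) := by
    simp [Commute, SemiconjBy, Algebra.TensorProduct.tmul_mul_tmul]
  rw [DD, hc.add_pow]
  refine Finset.sum_congr rfl fun i hi => ?_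
  rw [Algebra.TensorProduct.tmul_pow, Algebra.TensorProduct.tmul_pow, one_pow, one_pow,
    Algebra.TensorProduct.tmul_mul_tmul, one_mul, mul_one, ← wd_replicate, ← wd_replicate]
  rw [← (Nat.cast_commute (n.choose i) _).eq, ← nsmul_eq_mul, ← Nat.cast_smul_eq_nsmul K]

lemma expansion (x y : A) (α β : ℕ) :
    unshuffle K A (wd (List.replicate α x ++ List.replicate β y)) =
      ∑ i ∈ Finset.range (α + 1), ∑ j ∈ Finset.range (β + 1),
        ((α.choose i * β.choose j : ℕ) : K) •
          (wd (List.replicate i x ++ List.replicate j y) ⊗ₜ[K]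
           wd (List.replicate (α - i) x ++ List.replicate (β - j) y)) := by
  rw [unshuffle_wd_rep, DD_pow, DD_pow, Finset.sum_mul_sum]
  refine Finset.sum_congr rfl fun i hi => Finset.sum_congr rfl fun j hj => ?_
  rw [smul_mul_smul_comm, Algebra.TensorProduct.tmul_mul_tmul, wd_mul, wd_mul, Nat.cast_mul]

noncomputable def coeffW (u : List A) : MonoidAlgebra K (FreeMonoid A) →ₗ[K] K where
  toFun x := x.coeff (FreeMonoid.ofList u)
  map_add' _ _ := rfl
  map_smul' _ _ := rfl

noncomputable def coeffT (u v : List A) :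
    MonoidAlgebra K (FreeMonoid A) ⊗[K] MonoidAlgebra K (FreeMonoid A) →ₗ[K] K :=
  (TensorProduct.lid K K).toLinearMap ∘ₗ TensorProduct.map (coeffW u) (coeffW v)

open scoped Classical in
lemma coeffW_wd (t s : List A) : coeffW (K := K) t (wd s) = if s = t then 1 else 0 := by
  show (MonoidAlgebra.single (FreeMonoid.ofList s) (1 : K)).coeff (FreeMonoid.ofList t) = _
  simp [Finsupp.single_apply, EmbeddingLike.apply_eq_iff_eq]

open scoped Classical in
lemma coeffT_wd (u v w w' : List A) :
    coeffT (K := K) u v (wd w ⊗ₜ[K] wd w') =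
      (if w = u then 1 else 0) * (if w' = v then 1 else 0) := by
  simp only [coeffT, LinearMap.comp_apply, TensorProduct.map_tmul,
    LinearEquiv.coe_coe, TensorProduct.lid_tmul, smul_eq_mul, coeffW_wd]

-- word comparison lemmas
lemma rep_append_inj {x y : A} (hxy : x ≠ y) {i j i' j' : ℕ}
    (h : List.replicate i x ++ List.replicate j y = List.replicate i' x ++ List.replicate j' y) :
    i = i' ∧ j = j' := by
  classical
  constructor
  · have := congrArg (List.count x) h
    simpa [List.count_append, List.count_replicate, hxy, Ne.symm hxy] using this
  · have := congrArg (List.count y) h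
    simpa [List.count_append, List.count_replicate, hxy, Ne.symm hxy] using this

lemma rep_ne_mixed {x y : A} (hxy : x ≠ y) {i j : ℕ} (hi : 0 < i) (hj : 0 < j) :
    List.replicate i x ++ List.replicate j y ≠ List.replicate j y ++ List.replicate i x := by
  intro h
  obtain ⟨i, rfl⟩ : ∃ i', i = i' + 1 := ⟨i - 1, by omega⟩
  obtain ⟨j, rfl⟩ : ∃ j', j = j' + 1 := ⟨j - 1, by omega⟩
  have h0 := congrArg (fun l => l[0]?) h
  simp only [List.replicate_succ, List.cons_append, List.getElem?_cons_zero, Option.some.injEq] at h0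
  exact hxy h0

end Aux

section Eval
variable {K A : Type*} [CommSemiring K]

open scoped Classical in
lemma coeffT_diag (x y : A) (hxy : x ≠ y) (α β i₀ j₀ : ℕ) (hi : i₀ ≤ α) (hj : j₀ ≤ β) :
    coeffT (K := K) (List.replicate i₀ x ++ List.replicate j₀ y)
      (List.replicate (α - i₀) x ++ List.replicate (β - j₀) y)
      (unshuffle K A (wd (List.replicate α x ++ List.replicate β y)))
      = ((α.choose i₀ * β.choose j₀ : ℕ) : K) := by
  rw [expansion, map_sum]
  rw [Finset.sum_eq_single_of_mem i₀ (Finset.mem_range.mpr (by omega))]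
  · rw [map_sum, Finset.sum_eq_single_of_mem j₀ (Finset.mem_range.mpr (by omega))]
    · rw [map_smul, coeffT_wd, if_pos rfl, if_pos rfl, mul_one, smul_eq_mul, mul_one]
    · intro j hj' hne
      rw [map_smul, coeffT_wd, if_neg, zero_mul, smul_zero]
      intro hEq
      exact hne (rep_append_inj hxy hEq).2
  · intro i hi' hne
    rw [map_sum]
    apply Finset.sum_eq_zero
    intro j hj'
    rw [map_smul, coeffT_wd, if_neg, zero_mul, smul_zero]
    intro hEq
    exact hne (rep_append_inj hxy hEq).1

open scoped Classical in
lemma cross_zero (x y : A) (hxy : x ≠ y) (α β k : ℕ) (hk : 0 < k) (hkα : k < α) (hβ : 0 < β) :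
    coeffT (K := K) (List.replicate k x ++ List.replicate 0 y)
      (List.replicate (α - k) x ++ List.replicate (β - 0) y)
      (unshuffle K A (wd (List.replicate β y ++ List.replicate α x))) = 0 := by
  rw [expansion, map_sum]
  apply Finset.sum_eq_zero
  intro j hj
  rw [map_sum]
  apply Finset.sum_eq_zero
  intro i hi
  rw [map_smul, coeffT_wd]
  by_cases h1 : List.replicate j y ++ List.replicate i x
      = List.replicate k x ++ List.replicate 0 y
  · have h1' : List.replicate j y ++ List.replicate i x
        = List.replicate 0 y ++ List.replicate k x := by
      simpa using h1
    obtain ⟨rfl, rfl⟩ := rep_append_inj (Ne.symm hxy) h1'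
    have h2 : ¬(List.replicate (β - 0) y ++ List.replicate (α - i) x
        = List.replicate (α - i) x ++ List.replicate (β - 0) y) := by
      simp only [Nat.sub_zero]
      exact fun h => rep_ne_mixed hxy (by omega) hβ h.symm
    rw [if_neg h2, mul_zero, smul_zero]
  · rw [if_neg h1, zero_mul, smul_zero]

end Eval

section Boundary
variable {K A : Type*} [CommRing K]

open scoped Classical in
lemma coeffT_boundary (u v w1 w2 : List A) (hu : u ≠ []) (hv : v ≠ []) :
    coeffT (K := K) u v ((wd (K := K) w1 - wd (K := K) w2) ⊗ₜ[K] (1 : MonoidAlgebra K (FreeMonoid A))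
      + (1 : MonoidAlgebra K (FreeMonoid A)) ⊗ₜ[K] (wd (K := K) w1 - wd (K := K) w2)) = 0 := by
  rw [show (1 : MonoidAlgebra K (FreeMonoid A)) = wd [] from wd_nil.symm,
    TensorProduct.sub_tmul, TensorProduct.tmul_sub, map_add, map_sub, map_sub,
    coeffT_wd, coeffT_wd, coeffT_wd, coeffT_wd]
  rw [if_neg (Ne.symm hv), if_neg (Ne.symm hu)]
  ring

lemma DD_pow_boundary (x : A) (n : ℕ) (hn : 0 < n)
    (h : ∀ i, 0 < i → i < n → ((n.choose i : ℕ) : K) = 0) :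
    DD (K := K) x ^ n = wd (List.replicate n x) ⊗ₜ[K] 1 + 1 ⊗ₜ[K] wd (List.replicate n x) := by
  rw [DD_pow]
  have hsub : ({0, n} : Finset ℕ) ⊆ Finset.range (n + 1) := by
    intro t ht
    simp only [Finset.mem_insert, Finset.mem_singleton] at ht
    rcases ht with rfl | rfl <;> simp [Finset.mem_range] <;> omega
  rw [← Finset.sum_subset hsub]
  · rw [Finset.sum_pair hn.ne]
    simp only [Nat.choose_self, Nat.choose_zero_right, Nat.cast_one, one_smul,
      Nat.sub_zero, Nat.sub_self, List.replicate_zero]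
    rw [wd_nil]
    exact add_comm _ _
  · intro i hi hnot
    simp only [Finset.mem_insert, Finset.mem_singleton, not_or] at hnot
    rw [h i (by omega) (by have := Finset.mem_range.mp hi; omega), zero_smul]

end Boundary

section NumberTheory

lemma choose_pow_mul_cast (p : ℕ) (hp : p.Prime) (k m : ℕ) :
    (((p ^ k * m).choose (p ^ k) : ℕ) : ZMod p) = (m : ZMod p) := by
  haveI : Fact p.Prime := ⟨hp⟩
  induction k with
  | zero => simp
  | succ k ih =>
      have hl := Choose.choose_modEq_choose_mod_mul_choose_div
        (p := p) (n := p ^ (k + 1) * m) (k := p ^ (k + 1))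
      have hn : p ^ (k + 1) * m % p = 0 := by
        apply Nat.mod_eq_zero_of_dvd
        exact Dvd.dvd.mul_right (dvd_pow_self p (Nat.succ_ne_zero k)) m
      have hk' : p ^ (k + 1) % p = 0 := Nat.mod_eq_zero_of_dvd (dvd_pow_self p (Nat.succ_ne_zero k))
      have hd1 : p ^ (k + 1) * m / p = p ^ k * m := by
        rw [pow_succ, mul_comm (p ^ k) p, mul_assoc, Nat.mul_div_cancel_left _ hp.pos]
      have hd2 : p ^ (k + 1) / p = p ^ k := by
        rw [pow_succ, Nat.mul_div_cancel _ hp.pos]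
      rw [hn, hk', hd1, hd2, Nat.choose_self] at hl
      calc ((((p ^ (k+1)) * m).choose (p ^ (k+1)) : ℕ) : ZMod p)
          = (((p ^ k * m).choose (p ^ k) : ℕ) : ZMod p) := by
            have := (ZMod.intCast_eq_intCast_iff _ _ _).mpr hl
            rw [Int.cast_mul] at this
            simpa using this
        _ = (m : ZMod p) := ih

lemma choose_zero_iff_pow (p : ℕ) (hp : p.Prime) (n : ℕ) (hn : 0 < n) :
    (∀ i, 0 < i → i < n → ((n.choose i : ℕ) : ZMod p) = 0) ↔ ∃ m, n = p ^ m := by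
  constructor
  · intro h
    set k := n.factorization p with hk
    set m := n / p ^ k with hm
    have hmul : p ^ k * m = n := Nat.ordProj_mul_ordCompl_eq_self n p
    have hnd : ¬ p ∣ m := Nat.not_dvd_ordCompl hp hn.ne'
    rcases Nat.lt_or_ge 1 m with hm1 | hm1
    · exfalso
      have hpk : 0 < p ^ k := Nat.pow_pos hp.pos
      have hlt : p ^ k < n := by nlinarith [hmul]
      have := h (p ^ k) hpk hlt
      rw [← hmul] at this
      rw [choose_pow_mul_cast p hp] at this
      exact hnd ((ZMod.natCast_eq_zero_iff m p).mp this)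
    · have hm0 : m = 1 := by
        rcases Nat.eq_zero_or_pos m with h0 | h1
        · exfalso; rw [h0, mul_zero] at hmul; omega
        · omega
      exact ⟨k, by rw [← hmul, hm0, mul_one]⟩
  · rintro ⟨m, rfl⟩ i hi hilt
    have := hp.dvd_choose_pow hi.ne' hilt.ne
    exact (ZMod.natCast_eq_zero_iff _ p).mpr this

end NumberTheory


/-- over `ℤ/pℤ`, for distinct letters `a ≠ b` and `α, β ≥ 1`,
`a^α b^β − b^β a^α` is primitive iff `α` and `β` are powers of `p`. -/
theorem primitive_commutator_iff {A : Type*} (p : ℕ) (hp : p.Prime)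
    (a b : A) (hab : a ≠ b) (α β : ℕ) (hα : 0 < α) (hβ : 0 < β) :
    IsPrimitive (wd (K := ZMod p) (List.replicate α a ++ List.replicate β b)
        - wd (List.replicate β b ++ List.replicate α a)) ↔
      (∃ m : ℕ, α = p ^ m) ∧ (∃ n : ℕ, β = p ^ n) := by

  constructor
  · intro hP
    rw [IsPrimitive, map_sub] at hP
    constructor
    · rw [← choose_zero_iff_pow p hp α hα]
      intro i₀ hi0 hiα
      have hc := congrArg (coeffT (K := ZMod p) (List.replicate i₀ a ++ List.replicate 0 b)
        (List.replicate (α - i₀) a ++ List.replicate (β - 0) b)) hP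
      rw [map_sub, coeffT_diag a b hab α β i₀ 0 hiα.le (Nat.zero_le β),
        cross_zero a b hab α β i₀ hi0 hiα hβ, sub_zero,
        coeffT_boundary (List.replicate i₀ a ++ List.replicate 0 b)
          (List.replicate (α - i₀) a ++ List.replicate (β - 0) b)
          (List.replicate α a ++ List.replicate β b) (List.replicate β b ++ List.replicate α a)
          (by simp; omega) (by simp; omega)] at hc
      simpa using hc
    · rw [← choose_zero_iff_pow p hp β hβ]
      intro j₀ hj0 hjβ
      have hc := congrArg (coeffT (K := ZMod p) (List.replicate j₀ b ++ List.replicate 0 a)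
        (List.replicate (β - j₀) b ++ List.replicate (α - 0) a)) hP
      rw [map_sub, coeffT_diag b a hab.symm β α j₀ 0 hjβ.le (Nat.zero_le α),
        cross_zero b a hab.symm β α j₀ hj0 hjβ hα,
        coeffT_boundary (List.replicate j₀ b ++ List.replicate 0 a)
          (List.replicate (β - j₀) b ++ List.replicate (α - 0) a)
          (List.replicate α a ++ List.replicate β b) (List.replicate β b ++ List.replicate α a)
          (by simp; omega) (by simp; omega), zero_sub] at hc
      have : ((β.choose j₀ * α.choose 0 : ℕ) : ZMod p) = 0 := by
        rw [← neg_eq_zero]; exact hc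
      simpa using this
  · rintro ⟨hA, hB⟩
    rw [← choose_zero_iff_pow p hp α hα] at hA
    rw [← choose_zero_iff_pow p hp β hβ] at hB
    rw [IsPrimitive, map_sub, unshuffle_wd_rep a b α β, unshuffle_wd_rep b a β α,
      DD_pow_boundary a α hα hA, DD_pow_boundary b β hβ hB,
      ← wd_mul, ← wd_mul]
    simp only [add_mul, mul_add, Algebra.TensorProduct.tmul_mul_tmul, one_mul, mul_one,
      TensorProduct.sub_tmul, TensorProduct.tmul_sub, wd_mul]
    abel
end
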